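/- For the unbounded linear-threshold equilibrium equation x = [Wx + d]₀^∞ (entrywise positive part), x ∈ ℝⁿ is an equilibrium if and only if the pair z = [Wx + d]₀^∞, w = [−(Wx + d)]₀^∞ solves the linear complementarity problem: z, w ≥ 0, zᵀw = 0, and w = (I − W)z − d. Consequently, if I − W is a P-matrix then for every d ∈ ℝⁿ the equation x = [Wx + d]₀^∞ has exactly one solution. -/

import Mathlib

open Matrix
open scoped ENNReal
open Filter Topology

noncomputable def specRad {n : Type*} [Fintype n] [DecidableEq n] (A : Matrix n n ℝ) : ℝ :=
  sSup {r : ℝ | ∃ μ : ℂ, Module.End.HasEigenvalue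
    (Matrix.toLin' (A.map (fun x => (x : ℂ)))) μ ∧ r = ‖μ‖}

def IsHurwitz {n : Type*} [Fintype n] [DecidableEq n] (A : Matrix n n ℝ) : Prop :=
  ∀ μ : ℂ, Module.End.HasEigenvalue (Matrix.toLin' (A.map (fun x => (x : ℂ)))) μ → μ.re < 0

def TotallyHurwitz {n : Type*} [Fintype n] [DecidableEq n] (A : Matrix n n ℝ) : Prop :=
  ∀ S : Finset n,
    IsHurwitz (A.submatrix (fun i : {x // x ∈ S} => (i : n)) (fun i : {x // x ∈ S} => (i : n)))

def IsPMatrix {n : Type*} [Fintype n] [DecidableEq n] (A : Matrix n n ℝ) : Prop :=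
  ∀ S : Finset n,
    0 < (A.submatrix (fun i : {x // x ∈ S} => (i : n)) (fun i : {x // x ∈ S} => (i : n))).det

noncomputable def opNorm {m n : Type*} [Fintype m] [Fintype n] [DecidableEq n]
    (A : Matrix m n ℝ) : ℝ :=
  ‖LinearMap.toContinuousLinearMap (Matrix.toEuclideanLin A)‖

def TotallyLStable {n : Type*} [Fintype n] [DecidableEq n] (W : Matrix n n ℝ) : Prop :=
  ∃ P : Matrix n n ℝ, P.PosDef ∧ ∀ σ : n → ℝ, (∀ i, σ i = 0 ∨ σ i = 1) →
    (-((-1 + Wᵀ * Matrix.diagonal σ) * P + P * (-1 + Matrix.diagonal σ * W))).PosDef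

/-- componentwise positive part -/
def posv {n : Type*} (y : n → ℝ) : n → ℝ := fun i => max (y i) 0

/-- componentwise clamp to [0, m i], allowing `m i = ∞` -/
noncomputable def clamp {n : Type*} (m : n → ℝ≥0∞) (y : n → ℝ) : n → ℝ :=
  fun i => (min (ENNReal.ofReal (y i)) (m i)).toReal


section AuxLemmas

lemma posv_nonneg {n : Type*} (y : n → ℝ) (i : n) : 0 ≤ posv y i := le_max_right _ _
lemma posv_sub (y : ℝ) : max y 0 - max (-y) 0 = y := by rcases le_total y 0 with h|h <;> simp [max_eq_left, max_eq_right, h] <;> linarith [max_eq_left (neg_nonneg.mpr h)]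
lemma posv_mul (y : ℝ) : max y 0 * max (-y) 0 = 0 := by
  rcases le_total y 0 with h|h
  · simp [max_eq_right h]
  · simp [max_eq_right (neg_nonpos.mpr h)]


theorem IsPMatrix.det_submatrix_pos {n m : Type*} [Fintype n] [DecidableEq n]
    [Fintype m] [DecidableEq m] {A : Matrix n n ℝ} (hA : IsPMatrix A)
    (f : m → n) (hf : Function.Injective f) : 0 < (A.submatrix f f).det := by
  classical
  set S : Finset n := Finset.univ.map ⟨f, hf⟩ with hS
  have hmem : ∀ a : m, f a ∈ S := fun a => by simp [hS]
  let e : m ≃ {x // x ∈ S} := Equiv.ofBijective (fun a => ⟨f a, hmem a⟩)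
    ⟨fun a b hab => hf (by simpa using congrArg Subtype.val hab), by
      rintro ⟨x, hx⟩
      rw [hS, Finset.mem_map] at hx
      obtain ⟨a, -, ha⟩ := hx
      exact ⟨a, Subtype.ext ha⟩⟩
  have : A.submatrix f f =
      (A.submatrix (fun i : {x // x ∈ S} => (i : n)) (fun i : {x // x ∈ S} => (i : n))).submatrix e e := by
    ext a b; rfl
  rw [this, Matrix.det_submatrix_equiv_self]
  exact hA S

theorem IsPMatrix.det_pos {n : Type*} [Fintype n] [DecidableEq n] {A : Matrix n n ℝ}
    (hA : IsPMatrix A) : 0 < A.det := by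
  have := hA.det_submatrix_pos id Function.injective_id
  rwa [Matrix.submatrix_id_id] at this

theorem IsPMatrix.submatrix {n m : Type*} [Fintype n] [DecidableEq n]
    [Fintype m] [DecidableEq m] {A : Matrix n n ℝ} (hA : IsPMatrix A)
    (f : m → n) (hf : Function.Injective f) : IsPMatrix (A.submatrix f f) := by
  intro S
  rw [Matrix.submatrix_submatrix]
  exact hA.det_submatrix_pos _ (hf.comp Subtype.val_injective)


section DetDiag
variable {n : Type} [Fintype n] [DecidableEq n]

/-- delete row/col `a` equiv -/
def delEquiv (a : n) : {x : n // x ≠ a} ⊕ Unit ≃ n where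
  toFun := Sum.elim Subtype.val (fun _ => a)
  invFun x := if h : x = a then Sum.inr () else Sum.inl ⟨x, h⟩
  left_inv := by
    rintro (⟨x, hx⟩ | ⟨⟩)
    · simp [hx]
    · simp
  right_inv x := by by_cases h : x = a <;> simp [h]

lemma det_updateColumn_single (B : Matrix n n ℝ) (a : n) :
    (B.updateCol a (Pi.single a 1)).det =
      (B.submatrix (Subtype.val : {x : n // x ≠ a} → n) Subtype.val).det := by
  set C := B.updateCol a (Pi.single a 1) with hC
  have h1 : C.submatrix (delEquiv a) (delEquiv a) =
      Matrix.fromBlocks (B.submatrix Subtype.val Subtype.val) 0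
        (Matrix.of fun (_ : Unit) (j : {x : n // x ≠ a}) => B a j.val)
        (Matrix.of fun (_ _ : Unit) => (1 : ℝ)) := by
    ext i j
    rcases i with (⟨i, hi⟩ | ⟨⟩) <;> rcases j with (⟨j, hj⟩ | ⟨⟩)
    · simp [delEquiv, hC, Matrix.updateCol_apply, hj]
    · simp [delEquiv, hC, Matrix.updateCol_apply, Pi.single_apply, hi]
    · simp [delEquiv, hC, Matrix.updateCol_apply, hj]
    · simp [delEquiv, hC, Matrix.updateCol_apply, Pi.single_apply]
  calc C.det = (C.submatrix (delEquiv a) (delEquiv a)).det :=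
        (Matrix.det_submatrix_equiv_self _ _).symm
    _ = _ := by
        rw [h1, Matrix.det_fromBlocks_zero₁₂]
        simp

theorem det_add_diagonal_pos_aux : ∀ (N : ℕ) (n : Type) (_ : Fintype n) (_ : DecidableEq n),
    Fintype.card n ≤ N → ∀ (A : Matrix n n ℝ), IsPMatrix A →
    ∀ t : n → ℝ, (∀ i, 0 ≤ t i) → 0 < (A + Matrix.diagonal t).det := by
  intro N
  induction N with
  | zero =>
    intro n _ _ hcard A hA t ht
    have : IsEmpty n := Fintype.card_eq_zero_iff.mp (Nat.le_zero.mp hcard)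
    simp [Matrix.det_isEmpty]
  | succ N ih =>
    intro n instF instD hcard A hA t ht
    -- inner induction on support
    suffices h : ∀ (S : Finset n) (t : n → ℝ), (∀ i, 0 ≤ t i) → (∀ i ∉ S, t i = 0) →
        0 < (A + Matrix.diagonal t).det by
      exact h Finset.univ t ht (fun i hi => absurd (Finset.mem_univ i) hi)
    intro S
    induction S using Finset.induction_on with
    | empty =>
      intro t ht h0
      have : t = 0 := funext fun i => h0 i (Finset.notMem_empty i)
      have h2 : A + Matrix.diagonal t = A := by
        ext i j; simp [this, Matrix.diagonal_apply]
      rw [h2]; exact hA.det_pos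
    | @insert a S ha ihS =>
      intro t ht h0
      set t' : n → ℝ := Function.update t a 0 with ht'
      have ht'0 : ∀ i, 0 ≤ t' i := by
        intro i; by_cases h : i = a <;> simp [ht', h, Function.update_apply, ht i]
      have ht'S : ∀ i ∉ S, t' i = 0 := by
        intro i hi
        by_cases h : i = a
        · simp [ht', h]
        · simp [ht', Function.update_apply, h]
          exact h0 i (by simp [h, hi])
      set B := A + Matrix.diagonal t' with hB
      have hsplit : A + Matrix.diagonal t =
          B.updateCol a (fun i => B i a + t a * (Pi.single a (1:ℝ) : n → ℝ) i) := by
        ext i j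
        by_cases h : j = a
        · subst h
          by_cases h2 : i = j <;>
            simp [hB, Matrix.updateCol_apply, Matrix.diagonal_apply, h2, ht',
              Pi.single_apply, Function.update_apply]
        · simp [hB, Matrix.updateCol_apply, Matrix.diagonal_apply, h, ht',
            Function.update_apply]
          by_cases h2 : i = j
          · subst h2; simp [h]
          · simp [h2]
      have hdet : (A + Matrix.diagonal t).det =
          B.det + t a * (B.updateCol a (Pi.single a 1)).det := by
        rw [hsplit]
        have := Matrix.det_updateCol_add B a (fun i => B i a) (fun i => t a * (Pi.single a (1:ℝ) : n → ℝ) i)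
        rw [show (fun i => B i a + t a * (Pi.single a (1:ℝ) : n → ℝ) i) =
          ((fun i => B i a) + fun i => t a * (Pi.single a (1:ℝ) : n → ℝ) i) from rfl, this]
        congr 1
        · rw [Matrix.updateCol_eq_self]
        · rw [show (fun i => t a * (Pi.single a (1:ℝ) : n → ℝ) i) = t a • (Pi.single a (1:ℝ) : n → ℝ) from rfl,
            Matrix.det_updateCol_smul]
      have hminor : 0 < (B.updateCol a (Pi.single a 1)).det := by
        rw [det_updateColumn_single]
        have hBsub : B.submatrix (Subtype.val : {x : n // x ≠ a} → n) Subtype.val =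
            A.submatrix Subtype.val Subtype.val + Matrix.diagonal (fun i : {x : n // x ≠ a} => t' i.val) := by
          ext ⟨i, hi⟩ ⟨j, hj⟩
          by_cases h : i = j <;>
            simp [hB, Matrix.diagonal_apply, h, Subtype.ext_iff]
        rw [hBsub]
        have hcard' : Fintype.card {x : n // x ≠ a} ≤ N := by
          have h1 : Fintype.card {x : n // x ≠ a} < Fintype.card n :=
            Fintype.card_subtype_lt (x := a) (by simp)
          omega
        exact ih _ _ _ hcard' _ (hA.submatrix _ Subtype.val_injective) _ (fun i => ht'0 i.val)
      have hBdet : 0 < B.det := ihS t' ht'0 ht'S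
      rw [hdet]
      have : 0 ≤ t a * (B.updateCol a (Pi.single a 1)).det :=
        mul_nonneg (ht a) (le_of_lt hminor)
      linarith

theorem det_add_diagonal_pos {A : Matrix n n ℝ} (hA : IsPMatrix A)
    {t : n → ℝ} (ht : ∀ i, 0 ≤ t i) : 0 < (A + Matrix.diagonal t).det :=
  det_add_diagonal_pos_aux (Fintype.card n) n _ _ le_rfl A hA t ht

/-- sign non-reversal property of P-matrices -/
theorem IsPMatrix.sign_non_reversal {M : Matrix n n ℝ} (hM : IsPMatrix M)
    {x : n → ℝ} (hx : x ≠ 0) : ∃ i, 0 < x i * (M.mulVec x) i := by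
  by_contra hcon
  push_neg at hcon
  set m := {i : n // x i ≠ 0} with hm
  set A : Matrix m m ℝ := M.submatrix Subtype.val Subtype.val with hA
  have hAP : IsPMatrix A := hM.submatrix _ Subtype.val_injective
  set t : m → ℝ := fun i => -(M.mulVec x) i.val / x i.val with htdef
  have ht : ∀ i, 0 ≤ t i := by
    intro ⟨i, hi⟩
    have h1 : x i * (M.mulVec x) i ≤ 0 := hcon i
    rcases lt_or_gt_of_ne hi with h | h
    · have : 0 ≤ (M.mulVec x) i := nonneg_of_mul_nonpos_left (by linarith [mul_comm (x i) ((M.mulVec x) i)]) h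
      exact div_nonneg_of_nonpos (by linarith) (le_of_lt h)
    · have : (M.mulVec x) i ≤ 0 := nonpos_of_mul_nonpos_left (by linarith [mul_comm (x i) ((M.mulVec x) i)]) h
      exact div_nonneg (by linarith) (le_of_lt h)
  set x' : m → ℝ := fun i => x i.val with hx'
  have hker : (A + Matrix.diagonal t).mulVec x' = 0 := by
    funext i
    have hsum : ∑ j : m, M i.val j.val * x j.val = (M.mulVec x) i.val := by
      rw [Matrix.mulVec, dotProduct]
      have h1 : ∑ j : n, M i.val j * x j
          = ∑ j ∈ Finset.univ.filter (fun j => x j ≠ 0), M i.val j * x j := by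
        refine (Finset.sum_subset (Finset.filter_subset _ _) ?_).symm
        intro j _ hj
        simp only [Finset.mem_filter, Finset.mem_univ, true_and, not_not] at hj
        simp [hj]
      rw [h1]
      exact (Finset.sum_subtype _ (fun j => by simp) (fun j => M i.val j * x j)).symm
    have hAx : ((A + Matrix.diagonal t).mulVec x') i
        = (M.mulVec x) i.val + t i * x i.val := by
      rw [Matrix.add_mulVec, Pi.add_apply, Matrix.mulVec_diagonal]
      rw [show (A.mulVec x') i = ∑ j : m, M i.val j.val * x j.val from rfl, hsum]
    rw [hAx, htdef]
    have : x i.val ≠ 0 := i.property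
    field_simp
    simp
  have hdet : 0 < (A + Matrix.diagonal t).det := det_add_diagonal_pos hAP ht
  have hx'ne : x' ≠ 0 := by
    obtain ⟨i, hi⟩ := Function.ne_iff.mp hx
    exact Function.ne_iff.mpr ⟨⟨i, hi⟩, hi⟩
  have : (A + Matrix.diagonal t).det = 0 :=
    Matrix.exists_mulVec_eq_zero_iff.mp ⟨x', hx'ne, hker⟩
  linarith



def LCPSol {n : Type*} [Fintype n] (M : Matrix n n ℝ) (q z : n → ℝ) : Prop :=
  (∀ i, 0 ≤ z i) ∧ (∀ i, 0 ≤ (M.mulVec z + q) i) ∧ (∀ i, z i * (M.mulVec z + q) i = 0)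

theorem lcp_unique {M : Matrix n n ℝ} (hM : IsPMatrix M) {q z₁ z₂ : n → ℝ}
    (h₁ : LCPSol M q z₁) (h₂ : LCPSol M q z₂) : z₁ = z₂ := by
  by_contra hne
  obtain ⟨hz₁, hw₁, hc₁⟩ := h₁
  obtain ⟨hz₂, hw₂, hc₂⟩ := h₂
  have hx : z₁ - z₂ ≠ 0 := sub_ne_zero.mpr hne
  obtain ⟨i, hi⟩ := hM.sign_non_reversal hx
  have hMx : (M.mulVec (z₁ - z₂)) i = (M.mulVec z₁ + q) i - (M.mulVec z₂ + q) i := by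
    rw [Matrix.mulVec_sub]; simp
  rw [hMx] at hi
  have expand : (z₁ - z₂) i * ((M.mulVec z₁ + q) i - (M.mulVec z₂ + q) i)
      = -(z₁ i * (M.mulVec z₂ + q) i) - z₂ i * (M.mulVec z₁ + q) i := by
    have e1 := hc₁ i; have e2 := hc₂ i
    simp only [Pi.sub_apply]
    nlinarith [e1, e2]
  rw [expand] at hi
  nlinarith [mul_nonneg (hz₁ i) (hw₂ i), mul_nonneg (hz₂ i) (hw₁ i)]


lemma continuous_mulVec (M : Matrix n n ℝ) : Continuous (fun v : n → ℝ => M.mulVec v) := by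
  refine continuous_pi fun i => ?_
  simp only [Matrix.mulVec, dotProduct]
  exact continuous_finset_sum _ fun j _ => (continuous_const.mul (continuous_apply j))

/-- limit of LCP solutions is an LCP solution -/
lemma lcp_closed {M : Matrix n n ℝ} {q z : ℕ → n → ℝ} {q₀ z₀ : n → ℝ}
    (hsol : ∀ k, LCPSol M (q k) (z k)) (hq : Tendsto q atTop (𝓝 q₀))
    (hz : Tendsto z atTop (𝓝 z₀)) : LCPSol M q₀ z₀ := by
  have hev : ∀ i (v : ℕ → n → ℝ) (v₀ : n → ℝ), Tendsto v atTop (𝓝 v₀) →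
      Tendsto (fun k => v k i) atTop (𝓝 (v₀ i)) :=
    fun i v v₀ hv => ((continuous_apply i).tendsto v₀).comp hv
  have hw : Tendsto (fun k => M.mulVec (z k) + q k) atTop (𝓝 (M.mulVec z₀ + q₀)) :=
    (((continuous_mulVec M).tendsto z₀).comp hz).add hq
  refine ⟨fun i => ge_of_tendsto' (hev i z z₀ hz) (fun k => (hsol k).1 i), ?_, ?_⟩
  · exact fun i => ge_of_tendsto' (hev i _ _ hw) (fun k => (hsol k).2.1 i)
  · intro i
    have : Tendsto (fun k => z k i * (M.mulVec (z k) + q k) i) atTop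
        (𝓝 (z₀ i * (M.mulVec z₀ + q₀) i)) := (hev i z z₀ hz).mul (hev i _ _ hw)
    have h0 : (fun k => z k i * (M.mulVec (z k) + q k) i) = fun _ => (0:ℝ) :=
      funext fun k => (hsol k).2.2 i
    rw [h0] at this
    exact (tendsto_nhds_unique tendsto_const_nhds this).symm

/-- uniform bound on LCP solutions for bounded q -/
theorem lcp_bound {M : Matrix n n ℝ} (hM : IsPMatrix M) (B : ℝ) :
    ∃ C, ∀ q z, LCPSol M q z → ‖q‖ ≤ B → ‖z‖ ≤ C := by
  by_contra hcon
  push_neg at hcon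
  have hseq : ∀ k : ℕ, ∃ q z, LCPSol M q z ∧ ‖q‖ ≤ B ∧ (k : ℝ) < ‖z‖ := by
    intro k
    obtain ⟨q, z, h1, h2, h3⟩ := hcon k
    exact ⟨q, z, h1, h2, h3⟩
  choose q z hsol hqB hzk using hseq
  set c : ℕ → ℝ := fun k => ‖z k‖ with hc
  have hcpos : ∀ k, 0 < c k := fun k => lt_of_le_of_lt (Nat.cast_nonneg k) (hzk k)
  set u : ℕ → n → ℝ := fun k => (c k)⁻¹ • z k with hu
  have hunorm : ∀ k, ‖u k‖ = 1 := by
    intro k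
    rw [hu]; simp only [norm_smul, norm_inv, Real.norm_eq_abs, abs_of_pos (hcpos k)]
    exact inv_mul_cancel₀ (hcpos k).ne'
  have hball : ∀ k, u k ∈ Metric.closedBall (0 : n → ℝ) 1 := by
    intro k; simp [Metric.mem_closedBall, dist_zero_right, (hunorm k).le]
  obtain ⟨u₀, hu₀mem, φ, hφ, hulim⟩ :=
    tendsto_subseq_of_bounded Metric.isBounded_closedBall hball
  have hcat : Tendsto (fun k => c (φ k)) atTop atTop := by
    apply tendsto_atTop_mono (fun k => ?_) tendsto_natCast_atTop_atTop
    calc (k : ℝ) ≤ (φ k : ℝ) := by exact_mod_cast Nat.cast_le.mpr (hφ.le_apply)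
      _ ≤ c (φ k) := (hzk (φ k)).le
  have hcinv : Tendsto (fun k => (c (φ k))⁻¹) atTop (𝓝 0) := hcat.inv_tendsto_atTop
  -- q/c → 0
  have hqc : Tendsto (fun k => (c (φ k))⁻¹ • q (φ k)) atTop (𝓝 (0 : n → ℝ)) := by
    rw [tendsto_zero_iff_norm_tendsto_zero]
    have hb : ∀ k, ‖(c (φ k))⁻¹ • q (φ k)‖ ≤ (c (φ k))⁻¹ * max B 0 := by
      intro k
      rw [norm_smul, norm_inv, Real.norm_eq_abs, abs_of_pos (hcpos (φ k))]
      exact mul_le_mul_of_nonneg_left ((hqB (φ k)).trans (le_max_left _ _))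
        (inv_nonneg.mpr (hcpos (φ k)).le)
    have h0 : Tendsto (fun k => (c (φ k))⁻¹ * max B 0) atTop (𝓝 (0 * max B 0)) :=
      hcinv.mul_const _
    rw [zero_mul] at h0
    exact squeeze_zero (fun k => norm_nonneg _) hb h0
  -- v k := M u k + c⁻¹ q  tends to M u₀
  have hv : Tendsto (fun k => M.mulVec (u (φ k)) + (c (φ k))⁻¹ • q (φ k)) atTop
      (𝓝 (M.mulVec u₀)) := by
    have h1 : Tendsto (fun k => M.mulVec (u (φ k))) atTop (𝓝 (M.mulVec u₀)) :=
      ((continuous_mulVec M).tendsto u₀).comp hulim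
    simpa using h1.add hqc
  have hvz : ∀ k i, 0 ≤ (M.mulVec (u k) + (c k)⁻¹ • q k) i := by
    intro k i
    have : (M.mulVec (u k) + (c k)⁻¹ • q k) i = (c k)⁻¹ * (M.mulVec (z k) + q k) i := by
      simp [hu, Matrix.mulVec_smul, mul_add]
    rw [this]
    exact mul_nonneg (inv_nonneg.mpr (hcpos k).le) ((hsol k).2.1 i)
  have hev : ∀ i (v : ℕ → n → ℝ) (v₀ : n → ℝ), Tendsto v atTop (𝓝 v₀) →
      Tendsto (fun k => v k i) atTop (𝓝 (v₀ i)) :=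
    fun i v v₀ hv => ((continuous_apply i).tendsto v₀).comp hv
  have hu₀nonneg : ∀ i, 0 ≤ u₀ i := by
    intro i
    refine ge_of_tendsto' (hev i _ _ hulim) (fun k => ?_)
    simp only [Function.comp_apply, hu, Pi.smul_apply, smul_eq_mul]
    exact mul_nonneg (inv_nonneg.mpr (hcpos (φ k)).le) ((hsol (φ k)).1 i)
  have hMu₀ : ∀ i, 0 ≤ (M.mulVec u₀) i :=
    fun i => ge_of_tendsto' (hev i _ _ hv) (fun k => hvz (φ k) i)
  have hcomp : ∀ i, u₀ i * (M.mulVec u₀) i = 0 := by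
    intro i
    have hlim : Tendsto (fun k => u (φ k) i * (M.mulVec (u (φ k)) + (c (φ k))⁻¹ • q (φ k)) i)
        atTop (𝓝 (u₀ i * (M.mulVec u₀) i)) := by
      exact Tendsto.mul (by exact hev i _ _ hulim) (hev i _ _ hv)
    have hz0 : ∀ k, u (φ k) i * (M.mulVec (u (φ k)) + (c (φ k))⁻¹ • q (φ k)) i = 0 := by
      intro k
      have e1 : (M.mulVec (u (φ k)) + (c (φ k))⁻¹ • q (φ k)) i
          = (c (φ k))⁻¹ * (M.mulVec (z (φ k)) + q (φ k)) i := by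
        simp [hu, Matrix.mulVec_smul, mul_add]
      have e2 : u (φ k) i = (c (φ k))⁻¹ * z (φ k) i := by simp [hu]
      rw [e1, e2]
      have := (hsol (φ k)).2.2 i
      ring_nf
      nlinarith [this]
    have h0 : (fun k => u (φ k) i * (M.mulVec (u (φ k)) + (c (φ k))⁻¹ • q (φ k)) i)
        = fun _ => (0:ℝ) := funext hz0
    rw [h0] at hlim
    exact (tendsto_nhds_unique tendsto_const_nhds hlim).symm
  have hu₀ne : u₀ ≠ 0 := by
    have : Tendsto (fun k => ‖u (φ k)‖) atTop (𝓝 ‖u₀‖) :=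
      (continuous_norm.tendsto u₀).comp hulim
    have h1 : (fun k => ‖u (φ k)‖) = fun _ => (1:ℝ) := funext fun k => hunorm (φ k)
    rw [h1] at this
    have : ‖u₀‖ = 1 := (tendsto_nhds_unique this tendsto_const_nhds)
    intro h; rw [h] at this; simp at this
  obtain ⟨i, hi⟩ := hM.sign_non_reversal hu₀ne
  rw [hcomp i] at hi
  exact lt_irrefl 0 hi
end DetDiag

section
variable {n : ℕ}

lemma mulVec_snoc_castSucc (M : Matrix (Fin (n+1)) (Fin (n+1)) ℝ) (v : Fin n → ℝ) (t : ℝ)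
    (i : Fin n) :
    (M.mulVec (Fin.snoc v t)) i.castSucc =
      ((M.submatrix Fin.castSucc Fin.castSucc).mulVec v) i + t * M i.castSucc (Fin.last n) := by
  simp only [Matrix.mulVec, dotProduct, Fin.sum_univ_castSucc, Fin.snoc_castSucc,
    Fin.snoc_last, Matrix.submatrix_apply]
  ring

lemma mulVec_snoc_last (M : Matrix (Fin (n+1)) (Fin (n+1)) ℝ) (v : Fin n → ℝ) (t : ℝ) :
    (M.mulVec (Fin.snoc v t)) (Fin.last n) =
      (∑ j : Fin n, M (Fin.last n) j.castSucc * v j) + M (Fin.last n) (Fin.last n) * t := by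
  simp only [Matrix.mulVec, dotProduct, Fin.sum_univ_castSucc, Fin.snoc_castSucc,
    Fin.snoc_last]
end

theorem lcp_exists : ∀ (k : ℕ) (M : Matrix (Fin k) (Fin k) ℝ), IsPMatrix M →
    ∀ q : Fin k → ℝ, ∃ z, LCPSol M q z := by
  intro k
  induction k with
  | zero =>
    intro M hM q
    exact ⟨0, fun i => i.elim0, fun i => i.elim0, fun i => i.elim0⟩
  | succ n ih =>
    intro M hM q
    set M' : Matrix (Fin n) (Fin n) ℝ := M.submatrix Fin.castSucc Fin.castSucc with hM'def
    have hM' : IsPMatrix M' := hM.submatrix _ (Fin.castSucc_injective n)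
    choose sol hsolp using ih M' hM'
    set qt : ℝ → Fin n → ℝ := fun t i => q i.castSucc + t * M i.castSucc (Fin.last n) with hqt
    set zt : ℝ → Fin n → ℝ := fun t => sol (qt t) with hzt
    set f : ℝ → ℝ := fun t => (∑ j : Fin n, M (Fin.last n) j.castSucc * zt t j)
      + M (Fin.last n) (Fin.last n) * t + q (Fin.last n) with hf
    -- given good t, build a solution
    have build : ∀ t : ℝ, 0 ≤ t → 0 ≤ f t → t * f t = 0 →
        LCPSol M q (Fin.snoc (zt t) t) := by
      intro t ht hft htf
      obtain ⟨hz1, hz2, hz3⟩ := hsolp (qt t)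
      have hwcast : ∀ i : Fin n, (M.mulVec (Fin.snoc (zt t) t) + q) i.castSucc
          = (M'.mulVec (zt t) + qt t) i := by
        intro i
        rw [Pi.add_apply, mulVec_snoc_castSucc]
        simp [hqt]; ring
      have hwlast : (M.mulVec (Fin.snoc (zt t) t) + q) (Fin.last n) = f t := by
        rw [Pi.add_apply, mulVec_snoc_last, hf]
      refine ⟨?_, ?_, ?_⟩
      · intro i
        refine Fin.lastCases ?_ (fun j => ?_) i
        · simpa using ht
        · simpa using hz1 j
      · intro i
        refine Fin.lastCases ?_ (fun j => ?_) i
        · rw [hwlast]; exact hft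
        · rw [hwcast]; exact hz2 j
      · intro i
        refine Fin.lastCases ?_ (fun j => ?_) i
        · rw [hwlast]; simpa using htf
        · rw [hwcast]; simpa using hz3 j
    -- continuity of zt
    have hqtcont : Continuous qt := by
      refine continuous_pi fun i => ?_
      exact continuous_const.add (continuous_id.mul continuous_const)
    have hztcont : Continuous zt := by
      rw [continuous_iff_seqContinuous]
      intro ts t hts
      have hq : Tendsto (fun k => qt (ts k)) atTop (𝓝 (qt t)) := (hqtcont.tendsto t).comp hts
      have hBdd : BddAbove (Set.range fun k => ‖qt (ts k)‖) :=
        ((continuous_norm.tendsto (qt t)).comp hq).bddAbove_range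
      obtain ⟨B, hB⟩ := hBdd
      have hB' : ∀ k, ‖qt (ts k)‖ ≤ B := fun k => hB (Set.mem_range_self k)
      obtain ⟨C, hC⟩ := lcp_bound hM' B
      have hzb : ∀ k, zt (ts k) ∈ Metric.closedBall (0 : Fin n → ℝ) C := by
        intro k
        simp only [Metric.mem_closedBall, dist_zero_right]
        exact hC _ _ (hsolp _) (hB' k)
      apply tendsto_of_subseq_tendsto
      intro ns hns
      obtain ⟨v₀, hv₀mem, ψ, hψ, hvlim⟩ :=
        tendsto_subseq_of_bounded Metric.isBounded_closedBall (fun k => hzb (ns k))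
      have hnsψ : Tendsto (fun k => ns (ψ k)) atTop atTop :=
        hns.comp hψ.tendsto_atTop
      have hsolv : LCPSol M' (qt t) v₀ :=
        lcp_closed (fun k => hsolp (qt (ts (ns (ψ k))))) (hq.comp hnsψ) hvlim
      have : v₀ = zt t := lcp_unique hM' hsolv (hsolp (qt t))
      exact ⟨ψ, by rw [← this]; exact hvlim⟩
    have hfcont : Continuous f := by
      refine (Continuous.add ?_ continuous_const)
      refine Continuous.add ?_ (continuous_const.mul continuous_id)
      refine continuous_finset_sum _ fun j _ => ?_
      exact continuous_const.mul ((continuous_apply j).comp hztcont)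
    rcases le_or_gt 0 (f 0) with hf0 | hf0
    · exact ⟨_, build 0 le_rfl hf0 (zero_mul _)⟩
    · -- show ∃ T ≥ 0 with 0 < f T
      have hT : ∃ T : ℝ, 0 ≤ T ∧ 0 < f T := by
        by_contra hcon
        push_neg at hcon
        set ts : ℕ → ℝ := fun k => (k : ℝ) + 1 with hts
        have htpos : ∀ k, 0 < ts k := fun k => by positivity
        set v : ℕ → Fin n → ℝ := fun k => (ts k)⁻¹ • zt (ts k) with hv
        set p : ℕ → Fin n → ℝ :=
          fun k i => (ts k)⁻¹ * q i.castSucc + M i.castSucc (Fin.last n) with hp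
        have hsolv : ∀ k, LCPSol M' (p k) (v k) := by
          intro k
          obtain ⟨hz1, hz2, hz3⟩ := hsolp (qt (ts k))
          have key : ∀ i, (M'.mulVec (v k) + p k) i
              = (ts k)⁻¹ * ((M'.mulVec (zt (ts k)) + qt (ts k)) i) := by
            intro i
            simp only [Pi.add_apply, hv, Matrix.mulVec_smul, Pi.smul_apply, smul_eq_mul, hp, hqt]
            field_simp
            rw [add_div, add_div, mul_div_cancel_left₀ _ (htpos k).ne']
          refine ⟨fun i => ?_, fun i => ?_, fun i => ?_⟩
          · exact mul_nonneg (inv_nonneg.mpr (htpos k).le) (hz1 i)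
          · rw [key]; exact mul_nonneg (inv_nonneg.mpr (htpos k).le) (hz2 i)
          · rw [key]
            simp only [hv, Pi.smul_apply, smul_eq_mul]
            have h3 := hz3 i
            linear_combination ((ts k)⁻¹ * (ts k)⁻¹) * h3
        -- p k → p∞
        have hplim : Tendsto p atTop (𝓝 (fun i : Fin n => M i.castSucc (Fin.last n))) := by
          refine tendsto_pi_nhds.mpr fun i => ?_
          have h1 : Tendsto (fun k => (ts k)⁻¹) atTop (𝓝 0) := by
            apply Tendsto.inv_tendsto_atTop
            apply tendsto_atTop_add_const_right
            exact tendsto_natCast_atTop_atTop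
          have := (h1.mul_const (q i.castSucc)).add_const (M i.castSucc (Fin.last n))
          simpa [hp, mul_comm] using this
        have hBdd : BddAbove (Set.range fun k => ‖p k‖) :=
          ((continuous_norm.tendsto _).comp hplim).bddAbove_range
        obtain ⟨B, hB⟩ := hBdd
        obtain ⟨C, hC⟩ := lcp_bound hM' B
        have hvball : ∀ k, v k ∈ Metric.closedBall (0 : Fin n → ℝ) C := by
          intro k
          simp only [Metric.mem_closedBall, dist_zero_right]
          exact hC _ _ (hsolv k) (hB (Set.mem_range_self k))
        obtain ⟨v₀, hv₀mem, ψ, hψ, hvlim⟩ :=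
          tendsto_subseq_of_bounded Metric.isBounded_closedBall hvball
        have hsolv₀ : LCPSol M' (fun i : Fin n => M i.castSucc (Fin.last n)) v₀ :=
          lcp_closed (fun k => hsolv (ψ k)) (hplim.comp hψ.tendsto_atTop) hvlim
        -- u = snoc v₀ 1 contradicts sign non-reversal
        set u : Fin (n+1) → ℝ := Fin.snoc v₀ 1 with hu
        have hune : u ≠ 0 := by
          intro h
          have := congrFun h (Fin.last n)
          simp [hu] at this
        obtain ⟨i, hi⟩ := hM.sign_non_reversal hune
        refine absurd hi (not_lt.mpr ?_)
        refine Fin.lastCases ?_ (fun j => ?_) i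
        · -- last coordinate: (M u) last ≤ 0
          rw [mulVec_snoc_last]
          have hexpr : ∀ k, (∑ j : Fin n, M (Fin.last n) j.castSucc * v (ψ k) j)
              + M (Fin.last n) (Fin.last n)
              = (ts (ψ k))⁻¹ * (f (ts (ψ k)) - q (Fin.last n)) := by
            intro k
            simp only [hf, hv, Pi.smul_apply, smul_eq_mul]
            rw [show (∑ x : Fin n, M (Fin.last n) x.castSucc * ((ts (ψ k))⁻¹ * zt (ts (ψ k)) x))
              = (ts (ψ k))⁻¹ * ∑ j : Fin n, M (Fin.last n) j.castSucc * zt (ts (ψ k)) j from by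
                rw [Finset.mul_sum]; exact Finset.sum_congr rfl fun j _ => by ring]
            field_simp
            rw [add_sub_cancel_right, add_div, mul_div_cancel_left₀ _ (htpos (ψ k)).ne']
          have hlim1 : Tendsto (fun k => (∑ j : Fin n, M (Fin.last n) j.castSucc * v (ψ k) j)
              + M (Fin.last n) (Fin.last n)) atTop
              (𝓝 ((∑ j : Fin n, M (Fin.last n) j.castSucc * v₀ j)
                + M (Fin.last n) (Fin.last n))) := by
            refine Tendsto.add_const _ ?_
            refine tendsto_finset_sum _ fun j _ => ?_
            exact (((continuous_apply j).tendsto v₀).comp hvlim).const_mul _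
          have hub : ∀ k, (ts (ψ k))⁻¹ * (f (ts (ψ k)) - q (Fin.last n))
              ≤ (ts (ψ k))⁻¹ * (- q (Fin.last n)) := by
            intro k
            apply mul_le_mul_of_nonneg_left _ (inv_nonneg.mpr (htpos (ψ k)).le)
            have := hcon (ts (ψ k)) (htpos (ψ k)).le
            linarith
          have hlim2 : Tendsto (fun k => (ts (ψ k))⁻¹ * (- q (Fin.last n))) atTop (𝓝 0) := by
            have h2 : Tendsto ts atTop atTop :=
              tendsto_atTop_add_const_right _ _ tendsto_natCast_atTop_atTop
            have h1 : Tendsto (fun k => (ts (ψ k))⁻¹) atTop (𝓝 0) :=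
              (h2.comp hψ.tendsto_atTop).inv_tendsto_atTop
            have h3 := h1.mul_const (- q (Fin.last n))
            rw [zero_mul] at h3
            exact h3
          have hle : (∑ j : Fin n, M (Fin.last n) j.castSucc * v₀ j)
              + M (Fin.last n) (Fin.last n) ≤ 0 := by
            refine le_of_tendsto_of_tendsto' hlim1 hlim2 (fun k => ?_)
            rw [hexpr k]; exact hub k
          have hulast : u (Fin.last n) = 1 := by simp [hu]
          rw [hulast, one_mul, mul_one]
          exact hle
        · -- castSucc coordinates: product = 0
          rw [mulVec_snoc_castSucc]
          obtain ⟨hs1, hs2, hs3⟩ := hsolv₀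
          have husnoc : u j.castSucc = v₀ j := by simp [hu]
          have hulast : u (Fin.last n) = 1 := by simp [hu]
          have h3 := hs3 j
          simp only [Pi.add_apply] at h3
          have husnoc : u j.castSucc = v₀ j := by simp [hu]
          rw [one_mul, husnoc]
          exact le_of_eq h3
      obtain ⟨T, hT0, hfT⟩ := hT
      have h0T : (0:ℝ) ≤ T := hT0
      have : (0:ℝ) ∈ Set.Icc (f 0) (f T) := ⟨hf0.le, hfT.le⟩
      obtain ⟨t₀, ht₀mem, ht₀⟩ := intermediate_value_Icc h0T hfcont.continuousOn this
      exact ⟨_, build t₀ ht₀mem.1 (le_of_eq ht₀.symm) (by rw [ht₀, mul_zero])⟩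


end AuxLemmas

theorem stmt9 {n : ℕ} (W : Matrix (Fin n) (Fin n) ℝ) (hW : W.det ≠ 0) (d : Fin n → ℝ) :
    (∀ x : Fin n → ℝ,
      x = posv (W.mulVec x + d) ↔
        ((∀ i, 0 ≤ posv (W.mulVec x + d) i) ∧
         (∀ i, 0 ≤ posv (-(W.mulVec x + d)) i) ∧
         (∑ i, posv (W.mulVec x + d) i * posv (-(W.mulVec x + d)) i) = 0 ∧
         posv (-(W.mulVec x + d)) = (1 - W).mulVec (posv (W.mulVec x + d)) - d)) ∧
    (IsPMatrix (1 - W) → ∀ d' : Fin n → ℝ, ∃! x : Fin n → ℝ, x = posv (W.mulVec x + d')) := by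
  constructor
  · intro x
    set y := W.mulVec x + d with hy
    constructor
    · intro hx
      refine ⟨posv_nonneg _, posv_nonneg _, ?_, ?_⟩
      · apply Finset.sum_eq_zero; intro i _; exact posv_mul _
      · funext i
        have h1 : posv y i - posv (-y) i = y i := by simpa [posv] using posv_sub (y i)
        have : ((1 - W).mulVec (posv y)) i = posv y i - (W.mulVec (posv y)) i := by
          simp [Matrix.sub_mulVec, Matrix.one_mulVec]
        rw [Pi.sub_apply, this, ← hx]
        have : (W.mulVec x) i = y i - d i := by rw [hy]; simp
        have hxi : x i = posv y i := congrFun hx i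
        rw [this]; linarith [posv_sub (y i)]
    · rintro ⟨-, -, -, h4⟩
      have key : W.mulVec (posv y) = W.mulVec x := by
        funext i
        have h1 := congrFun h4 i
        have h2 : posv y i - posv (-y) i = y i := posv_sub (y i)
        have h3 : ((1 - W).mulVec (posv y)) i = posv y i - (W.mulVec (posv y)) i := by
          simp [Matrix.sub_mulVec, Matrix.one_mulVec]
        rw [Pi.sub_apply, h3] at h1
        have h5 : (W.mulVec x) i = y i - d i := by rw [hy]; simp
        rw [h5]; linarith
      have hinj : Function.Injective (W.mulVec) := by
        intro a b hab
        by_contra hne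
        have : ∃ v, v ≠ 0 ∧ W.mulVec v = 0 := ⟨a - b, sub_ne_zero.mpr hne, by
          rw [Matrix.mulVec_sub, hab, sub_self]⟩
        exact hW (Matrix.exists_mulVec_eq_zero_iff.mp this)
      exact (hinj key).symm

  · intro hP d'
    have key : ∀ x : Fin n → ℝ, x = posv (W.mulVec x + d') → LCPSol (1 - W) (-d') x := by
      intro x hx
      have hx0 : ∀ i, 0 ≤ x i := by
        intro i; rw [hx]; exact posv_nonneg _ i
      have hw : ∀ i, ((1 - W).mulVec x + (-d')) i = posv (-(W.mulVec x + d')) i := by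
        intro i
        have h1 : ((1 - W).mulVec x) i = x i - (W.mulVec x) i := by
          simp [Matrix.sub_mulVec, Matrix.one_mulVec]
        have h2 : x i = posv (W.mulVec x + d') i := congrFun hx i
        have h3 := posv_sub ((W.mulVec x + d') i)
        simp only [Pi.add_apply, Pi.neg_apply, h1]
        simp only [posv, Pi.add_apply, Pi.neg_apply] at h2 h3 ⊢
        linarith
      refine ⟨hx0, fun i => ?_, fun i => ?_⟩
      · rw [hw]; exact posv_nonneg _ i
      · rw [hw]
        have h2 : x i = posv (W.mulVec x + d') i := congrFun hx i
        rw [h2]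
        exact posv_mul _
    obtain ⟨z, hz1, hz2, hz3⟩ := lcp_exists n (1 - W) hP (-d')
    refine ⟨z, ?_, ?_⟩
    · -- z is a solution
      funext i
      have hwz : (W.mulVec z + d') i = z i - ((1 - W).mulVec z + (-d')) i := by
        have : ((1 - W).mulVec z) i = z i - (W.mulVec z) i := by
          simp [Matrix.sub_mulVec, Matrix.one_mulVec]
        simp only [Pi.add_apply, Pi.neg_apply, this]
        ring
      have hzi := hz1 i
      have hwi := hz2 i
      have hci := hz3 i
      simp only [posv, hwz]
      rcases mul_eq_zero.mp hci with h | h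
      · rw [h]
        exact (max_eq_right (by linarith)).symm
      · rw [h]; simp [max_eq_left hzi]
    · intro x hx
      exact lcp_unique hP (key x hx) ⟨hz1, hz2, hz3⟩
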